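/- Let n, k be integers with k ≥ 2, 2k < n and n > 4. For a non-identity permutation σ of [n] = {1,…,n}, let F_σ denote the number of k-element subsets h of [n] with σ(h) = h (setwise). Then F_σ ≤ C(n−2, k−2) + C(n−2, k), and equality holds if and only if σ is a transposition. -/

import Mathlib

/-- Let `2 ≤ k`, `2k < n`, `n > 4`. For a non-identity permutation `σ` of `[n]`, the
number `F_σ` of `k`-element subsets fixed setwise by `σ` satisfies
`F_σ ≤ C(n-2, k-2) + C(n-2, k)`, with equality if and only if `σ` is a transposition. -/
theorem stmt5 (n k : ℕ) (hk : 2 ≤ k) (h2k : 2 * k < n) (hn : 4 < n)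
    (σ : Equiv.Perm (Fin n)) (hσ : σ ≠ 1) :
    ((Finset.univ : Finset (Finset (Fin n))).filter
        (fun h => h.card = k ∧ h.image σ = h)).card
      ≤ Nat.choose (n - 2) (k - 2) + Nat.choose (n - 2) k ∧
    (((Finset.univ : Finset (Finset (Fin n))).filter
        (fun h => h.card = k ∧ h.image σ = h)).card
      = Nat.choose (n - 2) (k - 2) + Nat.choose (n - 2) k ↔ σ.IsSwap) := by
  classical
  obtain ⟨a, ha⟩ : ∃ a, σ a ≠ a := by
    by_contra hc
    push_neg at hc
    exact hσ (Equiv.ext hc)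
  set b := σ a with hb
  have hab : a ≠ b := fun h => ha h.symm
  set U : Finset (Fin n) := (Finset.univ.erase a).erase b with hU
  have hbU : b ∈ Finset.univ.erase a := Finset.mem_erase.2 ⟨Ne.symm hab, Finset.mem_univ _⟩
  have hUcard : U.card = n - 2 := by
    rw [hU, Finset.card_erase_of_mem hbU, Finset.card_erase_of_mem (Finset.mem_univ a),
      Finset.card_univ, Fintype.card_fin]
    omega
  have hmemU : ∀ x : Fin n, x ∈ U ↔ x ≠ b ∧ x ≠ a := by
    intro x; simp [hU, Finset.mem_erase]
  set S := (Finset.univ : Finset (Finset (Fin n))).filter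
      (fun h => h.card = k ∧ h.image σ = h) with hS
  have hmemS : ∀ h, h ∈ S ↔ h.card = k ∧ h.image σ = h := by
    intro h; simp [hS]
  have keymem : ∀ h : Finset (Fin n), h.image σ = h → ∀ x ∈ h, σ x ∈ h := by
    intro h hfix x hx
    rw [← hfix]; exact Finset.mem_image_of_mem σ hx
  have keyab : ∀ h : Finset (Fin n), h.image σ = h → (a ∈ h ↔ b ∈ h) := by
    intro h hfix
    constructor
    · intro hah
      exact hb ▸ keymem h hfix a hah
    · intro hbh
      rw [← hfix] at hbh
      obtain ⟨c, hc, hcb⟩ := Finset.mem_image.1 hbh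
      have hca : c = a := σ.injective (by rw [hcb, hb])
      rwa [← hca]
  set P1 := S.filter (fun h => a ∈ h) with hP1
  set P2 := S.filter (fun h => ¬ a ∈ h) with hP2
  have hsplit : P1.card + P2.card = S.card :=
    Finset.card_filter_add_card_filter_not _
  -- facts about members of P1
  have hP1mem : ∀ h ∈ P1, h.card = k ∧ h.image σ = h ∧ a ∈ h ∧ b ∈ h := by
    intro h hh
    rw [hP1, Finset.mem_filter, hmemS] at hh
    exact ⟨hh.1.1, hh.1.2, hh.2, (keyab h hh.1.2).1 hh.2⟩
  -- P2 is contained in the k-subsets of U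
  have hP2sub : P2 ⊆ U.powersetCard k := by
    intro h hh
    rw [hP2, Finset.mem_filter, hmemS] at hh
    obtain ⟨⟨hcard, hfix⟩, hah⟩ := hh
    have hbh : b ∉ h := fun hbh => hah ((keyab h hfix).2 hbh)
    rw [Finset.mem_powersetCard]
    refine ⟨fun x hx => (hmemU x).2 ⟨fun e => hbh (e ▸ hx), fun e => hah (e ▸ hx)⟩, hcard⟩
  have hpow2 : (U.powersetCard k).card = Nat.choose (n - 2) k := by
    rw [Finset.card_powersetCard, hUcard]
  have hpow1 : (U.powersetCard (k - 2)).card = Nat.choose (n - 2) (k - 2) := by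
    rw [Finset.card_powersetCard, hUcard]
  have hbound2 : P2.card ≤ Nat.choose (n - 2) k :=
    hpow2 ▸ Finset.card_le_card hP2sub
  -- the map h ↦ (h.erase a).erase b sends P1 into (k-2)-subsets of U
  have hf1 : ∀ h ∈ P1, (h.erase a).erase b ∈ U.powersetCard (k - 2) := by
    intro h hh
    obtain ⟨hcard, hfix, hah, hbh⟩ := hP1mem h hh
    rw [Finset.mem_powersetCard]
    constructor
    · intro x hx
      rw [Finset.mem_erase] at hx
      obtain ⟨hxb, hx2⟩ := hx
      rw [Finset.mem_erase] at hx2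
      exact (hmemU x).2 ⟨hxb, hx2.1⟩
    · rw [Finset.card_erase_of_mem (Finset.mem_erase.2 ⟨Ne.symm hab, hbh⟩),
        Finset.card_erase_of_mem hah, hcard]
      omega
  -- reconstruction of h ∈ P1 from its erasure
  have hrec : ∀ h ∈ P1, insert a (insert b ((h.erase a).erase b)) = h := by
    intro h hh
    obtain ⟨hcard, hfix, hah, hbh⟩ := hP1mem h hh
    rw [Finset.insert_erase (Finset.mem_erase.2 ⟨Ne.symm hab, hbh⟩), Finset.insert_erase hah]
  have hbound1 : P1.card ≤ Nat.choose (n - 2) (k - 2) := by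
    rw [← hpow1]
    apply Finset.card_le_card_of_injOn (fun h => (h.erase a).erase b)
      (fun h hh => Finset.mem_coe.2 (hf1 h (Finset.mem_coe.1 hh)))
    intro h1 hh1 h2 hh2 he
    have he' : (h1.erase a).erase b = (h2.erase a).erase b := he
    rw [← hrec h1 (Finset.mem_coe.1 hh1), ← hrec h2 (Finset.mem_coe.1 hh2), he']
  have hineq : S.card ≤ Nat.choose (n - 2) (k - 2) + Nat.choose (n - 2) k := by
    rw [← hsplit]; exact Nat.add_le_add hbound1 hbound2
  refine ⟨hineq, ?_, ?_⟩
  · -- equality implies swap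
    intro heq
    have hP2card : P2.card = Nat.choose (n - 2) k := by omega
    have hP2eq : P2 = U.powersetCard k :=
      Finset.eq_of_subset_of_card_le hP2sub (by rw [hpow2, ← hP2card])
    have hall : ∀ h : Finset (Fin n), h ⊆ U → h.card = k → h.image σ = h := by
      intro h hsub hcard
      have : h ∈ P2 := hP2eq ▸ Finset.mem_powersetCard.2 ⟨hsub, hcard⟩
      rw [hP2, Finset.mem_filter, hmemS] at this
      exact this.1.2
    have hfixU : ∀ x ∈ U, σ x = x := by
      intro x hx
      by_contra hne
      have hkle : k - 1 ≤ ((U.erase (σ x)).erase x).card := by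
        have h1 : (U.erase (σ x)).card - 1 ≤ ((U.erase (σ x)).erase x).card :=
          Finset.pred_card_le_card_erase
        have h2 : U.card - 1 ≤ (U.erase (σ x)).card := Finset.pred_card_le_card_erase
        omega
      obtain ⟨t, hts, htc⟩ := Finset.exists_subset_card_eq hkle
      have hxt : x ∉ t := fun hxt => (Finset.mem_erase.1 (hts hxt)).1 rfl
      have hhU : insert x t ⊆ U := by
        intro y hy
        rcases Finset.mem_insert.1 hy with rfl | hyt
        · exact hx
        · exact Finset.mem_of_mem_erase (Finset.mem_of_mem_erase (hts hyt))
      have hhc : (insert x t).card = k := by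
        rw [Finset.card_insert_of_notMem hxt, htc]; omega
      have hfix := hall (insert x t) hhU hhc
      have hm := keymem (insert x t) hfix x (Finset.mem_insert_self x t)
      rcases Finset.mem_insert.1 hm with he | ht
      · exact hne he
      · exact (Finset.mem_erase.1 (Finset.mem_erase.1 (hts ht)).2).1 rfl
    have hσbb : σ b ≠ b := by
      intro e
      exact hab (σ.injective (hb ▸ e : σ b = σ a)).symm
    have hσb : σ b = a := by
      have h2 : σ b ∉ U := by
        intro hm
        exact hσbb (σ.injective (hfixU (σ b) hm))
      by_contra hne
      exact h2 ((hmemU (σ b)).2 ⟨hσbb, hne⟩)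
    have hswap : σ = Equiv.swap a b := by
      apply Equiv.ext
      intro x
      rcases eq_or_ne x a with rfl | hxa
      · rw [Equiv.swap_apply_left]
      rcases eq_or_ne x b with rfl | hxb
      · rw [Equiv.swap_apply_right]; exact hσb
      · rw [Equiv.swap_apply_of_ne_of_ne hxa hxb]
        exact hfixU x ((hmemU x).2 ⟨hxb, hxa⟩)
    exact ⟨a, b, hab, hswap⟩
  · -- swap implies equality
    intro hsw
    obtain ⟨c, d, hcd, hσcd⟩ := hsw
    have hswap : σ = Equiv.swap a b := by
      have hac : a = c ∨ a = d := by
        by_contra hcon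
        push_neg at hcon
        exact ha (by rw [hb, hσcd]; exact Equiv.swap_apply_of_ne_of_ne hcon.1 hcon.2)
      rcases hac with rfl | rfl
      · have hbd : b = d := by rw [hb, hσcd, Equiv.swap_apply_left]
        rw [hσcd, hbd]
      · have hbc : b = c := by rw [hb, hσcd, Equiv.swap_apply_right]
        rw [hσcd, hbc, Equiv.swap_comm]
    have himfix : ∀ h : Finset (Fin n), h ⊆ U → h.image σ = h := by
      intro h hsub
      have hah : a ∉ h := fun hah => ((hmemU a).1 (hsub hah)).2 rfl
      have hbh : b ∉ h := fun hbh => ((hmemU b).1 (hsub hbh)).1 rfl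
      have heqon : ∀ x ∈ h, σ x = id x := by
        intro x hx
        rw [hswap]
        exact Equiv.swap_apply_of_ne_of_ne (fun e => hah (e ▸ hx)) (fun e => hbh (e ▸ hx))
      rw [Finset.image_congr heqon, Finset.image_id]
    have hP2eq : P2 = U.powersetCard k := by
      refine Finset.Subset.antisymm hP2sub ?_
      intro h hh
      rw [Finset.mem_powersetCard] at hh
      obtain ⟨hsub, hcard⟩ := hh
      have hah : a ∉ h := fun hah => ((hmemU a).1 (hsub hah)).2 rfl
      rw [hP2, Finset.mem_filter, hmemS]
      exact ⟨⟨hcard, himfix h hsub⟩, hah⟩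
    have hj : ∀ t ∈ U.powersetCard (k - 2), insert a (insert b t) ∈ P1 := by
      intro t ht
      rw [Finset.mem_powersetCard] at ht
      obtain ⟨hsub, hcard⟩ := ht
      have hat : a ∉ t := fun hat => ((hmemU a).1 (hsub hat)).2 rfl
      have hbt : b ∉ t := fun hbt => ((hmemU b).1 (hsub hbt)).1 rfl
      have habt : a ∉ insert b t := by
        rw [Finset.mem_insert]; push_neg; exact ⟨hab, hat⟩
      have hcard' : (insert a (insert b t)).card = k := by
        rw [Finset.card_insert_of_notMem habt, Finset.card_insert_of_notMem hbt, hcard]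
        omega
      have hfix : (insert a (insert b t)).image σ = insert a (insert b t) := by
        rw [Finset.image_insert, Finset.image_insert, himfix t hsub, ← hb]
        have hσbval : σ b = a := by rw [hswap, Equiv.swap_apply_right]
        rw [hσbval, Finset.insert_comm]
      rw [hP1, Finset.mem_filter, hmemS]
      exact ⟨⟨hcard', hfix⟩, Finset.mem_insert_self a _⟩
    have hright : ∀ t ∈ U.powersetCard (k - 2),
        ((insert a (insert b t)).erase a).erase b = t := by
      intro t ht
      rw [Finset.mem_powersetCard] at ht
      obtain ⟨hsub, hcard⟩ := ht
      have hat : a ∉ t := fun hat => ((hmemU a).1 (hsub hat)).2 rfl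
      have hbt : b ∉ t := fun hbt => ((hmemU b).1 (hsub hbt)).1 rfl
      have habt : a ∉ insert b t := by
        rw [Finset.mem_insert]; push_neg; exact ⟨hab, hat⟩
      rw [Finset.erase_insert habt, Finset.erase_insert hbt]
    have hP1card : P1.card = (U.powersetCard (k - 2)).card :=
      Finset.card_bij' (fun h _ => (h.erase a).erase b)
        (fun t _ => insert a (insert b t)) hf1 hj hrec hright
    have hP2card : P2.card = Nat.choose (n - 2) k := by rw [hP2eq, hpow2]
    rw [← hsplit, hP1card, hpow1, hP2card]
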